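/- For any set X, there is a bijection between the set of relations R : X → X → Prop that are symmetric and satisfy (R x y → R x x for all x, y), and the set of pairs (s, G) where s : Set X and G is a simple graph on the subtype {x // x ∈ s}. The bijection sends R to the pair consisting of its support s = {x | R x x} together with the simple graph on s whose adjacency relation relates distinct x, y ∈ s exactly when R x y. -/

import Mathlib

private lemma sigma_graph_ext {X : Type*} {s t : Set X} (G : SimpleGraph s)
    (H : SimpleGraph t) (h : s = t)
    (hadj : ∀ (x y : X) (hx : x ∈ s) (hy : y ∈ s) (hx' : x ∈ t) (hy' : y ∈ t),
      G.Adj ⟨x, hx⟩ ⟨y, hy⟩ ↔ H.Adj ⟨x, hx'⟩ ⟨y, hy'⟩) :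
    (⟨s, G⟩ : (s : Set X) × SimpleGraph s) = ⟨t, H⟩ := by
  subst h
  have : G = H := by
    ext ⟨x, hx⟩ ⟨y, hy⟩
    exact hadj x y hx hy hx hy
  rw [this]

/-- States of `X` in CPM(Rel) — symmetric relations `R` with `R x y → R x x` —
are in bijection with pairs of a subset `s ⊆ X` and a simple graph on `s`.
The bijection sends `R` to its support `{x | R x x}` with the simple graph
relating distinct `x, y` in the support exactly when `R x y`. -/
theorem states_equiv_graphs {X : Type*} :
    ∃ e : {R : X → X → Prop // Symmetric R ∧ ∀ x y, R x y → R x x} ≃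
        ((s : Set X) × SimpleGraph s),
      ∀ R : {R : X → X → Prop // Symmetric R ∧ ∀ x y, R x y → R x x},
        (e R).1 = {x | R.1 x x} ∧
        ∀ x y : (e R).1, (e R).2.Adj x y ↔ ((x : X) ≠ (y : X) ∧ R.1 x y) := by
  refine ⟨{
    toFun := fun R => ⟨{x | R.1 x x},
      { Adj := fun x y => (x : X) ≠ (y : X) ∧ R.1 x y
        symm := ⟨fun x y h => ⟨fun e => h.1 e.symm, R.2.1 h.2⟩⟩
        loopless := ⟨fun x h => h.1 rfl⟩ }⟩
    invFun := fun p => ⟨fun x y => ∃ hx : x ∈ p.1, ∃ hy : y ∈ p.1,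
        x = y ∨ p.2.Adj ⟨x, hx⟩ ⟨y, hy⟩,
      by
        constructor
        · rintro x y ⟨hx, hy, h | h⟩
          · exact ⟨hy, hx, Or.inl h.symm⟩
          · exact ⟨hy, hx, Or.inr h.symm⟩
        · rintro x y ⟨hx, hy, _⟩
          exact ⟨hx, hx, Or.inl rfl⟩⟩
    left_inv := by
      rintro ⟨R, hsymm, hpos⟩
      ext x y
      simp only [Set.mem_setOf_eq]
      constructor
      · rintro ⟨hx, hy, h | h⟩
        · exact h ▸ hx
        · exact h.2
      · intro h
        refine ⟨hpos x y h, hpos y x (hsymm h), ?_⟩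
        by_cases e : x = y
        · exact Or.inl e
        · exact Or.inr ⟨e, h⟩
    right_inv := by
      rintro ⟨s, G⟩
      refine sigma_graph_ext _ _ ?_ ?_
      · ext x
        constructor
        · rintro ⟨hx, _, _⟩; exact hx
        · intro hx; exact ⟨hx, hx, Or.inl rfl⟩
      · intro x y hx hy hx' hy'
        simp only [ne_eq, Subtype.mk.injEq]
        constructor
        · rintro ⟨hne, _, _, h | h⟩
          · exact absurd h hne
          · exact h
        · intro h
          have hne : x ≠ y := by rintro rfl; exact G.irrefl h
          exact ⟨hne, hx', hy', Or.inr h⟩ }, ?_⟩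
  intro R
  exact ⟨rfl, fun x y => Iff.rfl⟩
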